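/- Let V be an n-dimensional real inner product space and R an algebraic curvature tensor on V. If there exist a nonzero linear functional A such that A(X₁)R(X₂,X₅,X₃,X₄) + A(X₂)R(X₁,X₅,X₃,X₄) = 0 for all vectors, then R = 0. (Algebraic pointwise version of Lemma 3.1.) -/

import Mathlib

noncomputable section

/-- The wedge product of two (0,2)-tensors used in the paper. -/
def wedge {V : Type*} (q p : V → V → ℝ) (x1 x2 x3 x4 : V) : ℝ :=
  q x1 x4 * p x2 x3 - q x1 x3 * p x2 x4 + p x1 x4 * q x2 x3 - p x1 x3 * q x2 x4

variable {V : Type*} [NormedAddCommGroup V] [InnerProductSpace ℝ V] [FiniteDimensional ℝ V]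

/-- The metric, as a real-valued bilinear function. -/
def gf (x y : V) : ℝ := inner ℝ x y

/-- The symmetries of a generalized (algebraic) curvature tensor. -/
def IsACT (R : V →ₗ[ℝ] V →ₗ[ℝ] V →ₗ[ℝ] V →ₗ[ℝ] ℝ) : Prop :=
  (∀ a b c d, R a b c d = - R b a c d) ∧
  (∀ a b c d, R a b c d = - R a b d c) ∧
  (∀ a b c d, R a b c d = R c d a b) ∧
  (∀ a b c d, R a b c d + R b c a d + R c a b d = 0)

/-- Ricci tensor: metric contraction of `R` over the first and fourth arguments. -/
def ricci (R : V →ₗ[ℝ] V →ₗ[ℝ] V →ₗ[ℝ] V →ₗ[ℝ] ℝ) (x y : V) : ℝ :=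
  ∑ i, R (stdOrthonormalBasis ℝ V i) x y (stdOrthonormalBasis ℝ V i)

/-- Scalar curvature: trace of the Ricci tensor. -/
def scal (R : V →ₗ[ℝ] V →ₗ[ℝ] V →ₗ[ℝ] V →ₗ[ℝ] ℝ) : ℝ :=
  ∑ i, ricci R (stdOrthonormalBasis ℝ V i) (stdOrthonormalBasis ℝ V i)

/-- Ricci operator `L`, characterized by `g(L x, y) = S(x, y)`. -/
def ricOp (R : V →ₗ[ℝ] V →ₗ[ℝ] V →ₗ[ℝ] V →ₗ[ℝ] ℝ) (x : V) : V :=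
  ∑ i, ricci R x (stdOrthonormalBasis ℝ V i) • stdOrthonormalBasis ℝ V i

/-- Curvature operator: `g(R(x,y)z, w) = R(x,y,z,w)`. -/
def curvOp (R : V →ₗ[ℝ] V →ₗ[ℝ] V →ₗ[ℝ] V →ₗ[ℝ] ℝ) (x y z : V) : V :=
  ∑ i, R x y z (stdOrthonormalBasis ℝ V i) • stdOrthonormalBasis ℝ V i

/-- Metric dual vector field of a 1-form. -/
def dualVec (A : V →ₗ[ℝ] ℝ) : V :=
  ∑ i, A (stdOrthonormalBasis ℝ V i) • stdOrthonormalBasis ℝ V i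

/-- Algebraic pointwise version of Lemma 3.1: if a nonzero 1-form `A` satisfies
`A(X₁)R(X₂,X₅,X₃,X₄) + A(X₂)R(X₁,X₅,X₃,X₄) = 0`, then `R = 0`. -/
theorem extended_ws_lemma31_pointwise
    (R : V →ₗ[ℝ] V →ₗ[ℝ] V →ₗ[ℝ] V →ₗ[ℝ] ℝ) (hR : IsACT R)
    (A : V →ₗ[ℝ] ℝ) (hA : A ≠ 0)
    (h : ∀ x1 x2 x3 x4 x5 : V,
      A x1 * R x2 x5 x3 x4 + A x2 * R x1 x5 x3 x4 = 0) :
    R = 0 := by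
  obtain ⟨v, hv⟩ : ∃ v, A v ≠ 0 := by
    by_contra h'
    push_neg at h'
    exact hA (LinearMap.ext h')
  have hv0 : ∀ x5 x3 x4 : V, R v x5 x3 x4 = 0 := by
    intro x5 x3 x4
    have := h v v x3 x4 x5
    have h2 : A v * (2 * R v x5 x3 x4) = 0 := by ring_nf; ring_nf at this; linarith
    have := mul_eq_zero.mp h2
    rcases this with h3 | h3
    · exact absurd h3 hv
    · linarith
  ext x1 x5 x3 x4
  have := h x1 v x3 x4 x5
  rw [hv0 x5 x3 x4] at this
  simp only [mul_zero, zero_add] at this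
  have := mul_eq_zero.mp this
  rcases this with h3 | h3
  · exact absurd h3 hv
  · simpa using h3
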